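/- Let X be a Hilbert space and A ∈ L(X) be selfadjoint, positive semidefinite, injective, and weakly coercive (i.e., A + K₀ is coercive for some compact operator K₀). Then A is strictly positive definite: inf over nonzero u of ⟨A u, u⟩/‖u‖² is positive. -/

import Mathlib

open Filter Topology

lemma key_ineq {X : Type*} [NormedAddCommGroup X] [InnerProductSpace ℂ X] [CompleteSpace X]
    (A : X →L[ℂ] X) (hAsa : IsSelfAdjoint A)
    (hApos : ∀ u : X, 0 ≤ (inner ℂ (A u) u : ℂ).re) (u : X) :
    ‖A u‖ ^ 2 ≤ ‖A‖ * (inner ℂ (A u) u : ℂ).re := by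
  obtain ⟨w, hw⟩ : ∃ w, A u = w := ⟨A u, rfl⟩
  rw [hw]
  have hc : (0:ℝ) ≤ (inner ℂ w u : ℂ).re := by
    have := hApos u; rwa [hw] at this
  by_cases hw0 : w = 0
  · rw [hw0]; simpa using mul_nonneg (norm_nonneg A) hc
  have hsym := hAsa.isSymmetric
  have expand : ∀ t : ℝ, 0 ≤ (inner ℂ (A w) w : ℂ).re * (t * t) + (2 * ‖w‖ ^ 2) * t
      + (inner ℂ w u : ℂ).re := by
    intro t
    have h0 := hApos (u + (t : ℂ) • w)
    have h1 : (inner ℂ (A (u + (t : ℂ) • w)) (u + (t : ℂ) • w) : ℂ)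
        = inner ℂ w u + (t:ℂ) * inner ℂ w w + (t:ℂ) * inner ℂ (A w) u
          + (t:ℂ) * (t:ℂ) * inner ℂ (A w) w := by
      rw [map_add, map_smul, inner_add_left, inner_add_right, inner_add_right,
        inner_smul_left, inner_smul_right, inner_smul_left, inner_smul_right,
        Complex.conj_ofReal, hw]
      ring
    have h2 : (inner ℂ w w : ℂ) = ((‖w‖ ^ 2 : ℝ) : ℂ) := by
      rw [inner_self_eq_norm_sq_to_K]; norm_cast
    have h3 : (inner ℂ (A w) u : ℂ) = ((‖w‖ ^ 2 : ℝ) : ℂ) := by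
      have := hsym w u
      simp only [ContinuousLinearMap.coe_coe] at this
      rw [this, hw, inner_self_eq_norm_sq_to_K]; norm_cast
    rw [h1, h2, h3] at h0
    have h0' : 0 ≤ (inner ℂ w u : ℂ).re + t * ‖w‖ ^ 2 + t * ‖w‖ ^ 2
        + t * t * (inner ℂ (A w) w : ℂ).re := by
      simpa [Complex.add_re, Complex.mul_re, ← Complex.ofReal_pow, Complex.ofReal_re, Complex.ofReal_im] using h0
    nlinarith [h0']
  have hd := discrim_le_zero expand
  rw [discrim] at hd
  have h4 : ‖w‖ ^ 2 * ‖w‖ ^ 2 ≤ (inner ℂ (A w) w : ℂ).re * (inner ℂ w u : ℂ).re := by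
    nlinarith [hd]
  have h5 : (inner ℂ (A w) w : ℂ).re ≤ ‖A‖ * ‖w‖ * ‖w‖ := by
    calc (inner ℂ (A w) w : ℂ).re ≤ ‖(inner ℂ (A w) w : ℂ)‖ := Complex.re_le_norm _
      _ = ‖(inner ℂ (A w) w : ℂ)‖ := rfl
      _ ≤ ‖A w‖ * ‖w‖ := norm_inner_le_norm _ _
      _ ≤ ‖A‖ * ‖w‖ * ‖w‖ := by
          have := A.le_opNorm w
          nlinarith [norm_nonneg w]
  have hwpos : (0:ℝ) < ‖w‖ := norm_pos_iff.mpr hw0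
  nlinarith [h4, mul_le_mul_of_nonneg_right h5 hc, mul_pos hwpos hwpos]

/-- A selfadjoint, positive semidefinite, injective and weakly coercive bounded
operator on a Hilbert space is strictly positive definite. -/
theorem stmt_4 {X : Type*} [NormedAddCommGroup X] [InnerProductSpace ℂ X] [CompleteSpace X]
    (A : X →L[ℂ] X) (hAsa : IsSelfAdjoint A)
    (hApos : ∀ u : X, 0 ≤ (inner ℂ (A u) u : ℂ).re)
    (hAinj : Function.Injective ⇑A)
    (hweak : ∃ K₀ : X →L[ℂ] X, IsCompactOperator ⇑K₀ ∧
      ∃ c > (0 : ℝ), ∀ u : X, c * ‖u‖ ^ 2 ≤ ‖(inner ℂ ((A + K₀) u) u : ℂ)‖) :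
    ∃ c > (0 : ℝ), ∀ u : X, c * ‖u‖ ^ 2 ≤ (inner ℂ (A u) u : ℂ).re := by
  by_contra hcon
  push_neg at hcon
  obtain ⟨K₀, hK, c, hc, hcoer⟩ := hweak
  have hsym := hAsa.isSymmetric
  -- construct unit sequence with ⟪A vₙ, vₙ⟫ → 0
  have hexists : ∀ n : ℕ, ∃ v : X, ‖v‖ = 1 ∧ (inner ℂ (A v) v : ℂ).re < 1 / (n + 1) := by
    intro n
    obtain ⟨u, hu⟩ := hcon (1 / (n + 1)) (by positivity)
    have hu0 : u ≠ 0 := by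
      rintro rfl
      simp at hu
    have hnu : (0:ℝ) < ‖u‖ := norm_pos_iff.mpr hu0
    refine ⟨((‖u‖⁻¹ : ℝ) : ℂ) • u, ?_, ?_⟩
    · rw [norm_smul]
      simp [abs_of_pos (inv_pos.mpr hnu), inv_mul_cancel₀ hnu.ne']
    · have hinner : (inner ℂ (A (((‖u‖⁻¹ : ℝ) : ℂ) • u)) (((‖u‖⁻¹ : ℝ) : ℂ) • u) : ℂ).re
          = ‖u‖⁻¹ * ‖u‖⁻¹ * (inner ℂ (A u) u : ℂ).re := by
        rw [map_smul, inner_smul_left, inner_smul_right, Complex.conj_ofReal]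
        rw [← mul_assoc, ← Complex.ofReal_mul]
        rw [Complex.re_ofReal_mul]
      rw [hinner]
      have h2 : ‖u‖⁻¹ * ‖u‖⁻¹ * (inner ℂ (A u) u : ℂ).re
          < ‖u‖⁻¹ * ‖u‖⁻¹ * (1 / (n + 1) * ‖u‖ ^ 2) := by
        apply mul_lt_mul_of_pos_left hu
        positivity
      calc ‖u‖⁻¹ * ‖u‖⁻¹ * (inner ℂ (A u) u : ℂ).re
          < ‖u‖⁻¹ * ‖u‖⁻¹ * (1 / (n + 1) * ‖u‖ ^ 2) := h2
        _ = 1 / (n + 1) * ((‖u‖⁻¹ * ‖u‖) * (‖u‖⁻¹ * ‖u‖)) := by ring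
        _ = 1 / (n + 1) := by rw [inv_mul_cancel₀ hnu.ne']; ring
  choose v hv1 hv2 using hexists
  have htend0 : Tendsto (fun n => (inner ℂ (A (v n)) (v n) : ℂ).re) atTop (𝓝 0) :=
    squeeze_zero (fun n => hApos _) (fun n => (hv2 n).le)
      tendsto_one_div_add_atTop_nhds_zero_nat
  -- A vₙ → 0
  have hAv : Tendsto (fun n => ‖A (v n)‖) atTop (𝓝 0) := by
    have hb : ∀ n, ‖A (v n)‖ ≤ Real.sqrt (‖A‖ * (inner ℂ (A (v n)) (v n) : ℂ).re) := by
      intro n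
      rw [show ‖A (v n)‖ = Real.sqrt (‖A (v n)‖ ^ 2) by rw [Real.sqrt_sq (norm_nonneg _)]]
      exact Real.sqrt_le_sqrt (key_ineq A hAsa hApos (v n))
    have hs : Tendsto (fun n => Real.sqrt (‖A‖ * (inner ℂ (A (v n)) (v n) : ℂ).re)) atTop (𝓝 0) := by
      have h1 := htend0.const_mul ‖A‖
      rw [mul_zero] at h1
      have h2 := (Real.continuous_sqrt.tendsto 0).comp h1
      rw [Real.sqrt_zero] at h2
      exact h2
    exact squeeze_zero (fun n => norm_nonneg _) hb hs
  have hAv' : Tendsto (fun n => A (v n)) atTop (𝓝 0) :=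
    tendsto_zero_iff_norm_tendsto_zero.mpr hAv
  -- dense range of A
  have hdense : ∀ z : X, z ∈ closure ((LinearMap.range (A : X →ₗ[ℂ] X)) : Set X) := by
    have htop : (LinearMap.range (A : X →ₗ[ℂ] X)).topologicalClosure = ⊤ := by
      rw [Submodule.topologicalClosure_eq_top_iff, Submodule.eq_bot_iff]
      intro x hx
      have hx0 : (inner ℂ (A x) x : ℂ) = 0 :=
        hx (A x) ⟨x, rfl⟩
      have hk := key_ineq A hAsa hApos x
      rw [hx0] at hk
      simp at hk
      have hAx : A x = 0 := by
        have : ‖A x‖ = 0 := by simp [hk]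
        exact norm_eq_zero.mp this
      exact hAinj (by simpa using hAx)
    intro z
    have := congrArg (fun (K : Submodule ℂ X) => (K : Set X)) htop
    simp only [Submodule.topologicalClosure_coe, Submodule.top_coe] at this
    rw [this]; trivial
  -- weak convergence of vₙ to 0
  have hweakzero : ∀ z : X, Tendsto (fun n => ‖(inner ℂ z (v n) : ℂ)‖) atTop (𝓝 0) := by
    intro z
    rw [Metric.tendsto_atTop]
    intro ε hε
    obtain ⟨b, hbmem, hbz⟩ := Metric.mem_closure_iff.mp (hdense z) (ε / 2) (by positivity)
    obtain ⟨y, hy⟩ := hbmem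
    rw [Metric.tendsto_atTop] at hAv
    obtain ⟨N, hN⟩ := hAv (ε / (2 * (‖y‖ + 1))) (by positivity)
    refine ⟨N, fun n hn => ?_⟩
    have hAvn : ‖A (v n)‖ < ε / (2 * (‖y‖ + 1)) := by
      have := hN n hn
      rwa [Real.dist_eq, sub_zero, abs_of_nonneg (norm_nonneg _)] at this
    have hsplit : (inner ℂ z (v n) : ℂ) = inner ℂ (z - A y) (v n) + inner ℂ y (A (v n)) := by
      rw [inner_sub_left]
      have := hsym y (v n)
      simp only [ContinuousLinearMap.coe_coe] at this
      rw [this]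
      ring
    rw [Real.dist_eq, sub_zero, abs_of_nonneg (norm_nonneg _), hsplit]
    have e1 : ‖(inner ℂ (z - A y) (v n) : ℂ)‖ ≤ ‖z - A y‖ := by
      calc ‖(inner ℂ (z - A y) (v n) : ℂ)‖ ≤ ‖z - A y‖ * ‖v n‖ := norm_inner_le_norm _ _
        _ = ‖z - A y‖ := by rw [hv1 n, mul_one]
    have e2 : ‖(inner ℂ y (A (v n)) : ℂ)‖ ≤ ‖y‖ * ‖A (v n)‖ := norm_inner_le_norm _ _
    have e3 : ‖z - A y‖ < ε / 2 := by
      rw [← hy] at hbz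
      rw [← dist_eq_norm]
      exact hbz
    have e4 : ‖y‖ * ‖A (v n)‖ < ε / 2 := by
      have hy1 : ‖y‖ < ‖y‖ + 1 := by linarith
      calc ‖y‖ * ‖A (v n)‖ ≤ (‖y‖ + 1) * ‖A (v n)‖ := by
            apply mul_le_mul_of_nonneg_right (by linarith) (norm_nonneg _)
        _ < (‖y‖ + 1) * (ε / (2 * (‖y‖ + 1))) := by
            apply mul_lt_mul_of_pos_left hAvn (by positivity)
        _ = ε / 2 := by field_simp
    calc ‖(inner ℂ (z - A y) (v n) : ℂ) + inner ℂ y (A (v n))‖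
        ≤ ‖(inner ℂ (z - A y) (v n) : ℂ)‖ + ‖(inner ℂ y (A (v n)) : ℂ)‖ := norm_add_le _ _
      _ < ε / 2 + ε / 2 := by
          exact add_lt_add (e1.trans_lt e3) (e2.trans_lt e4)
      _ = ε := by ring
  -- compactness: extract convergent subsequence of K₀ vₙ
  have hK' : IsCompactOperator ⇑(K₀ : X →ₗ[ℂ] X) := hK
  obtain ⟨S, hScpt, hSsub⟩ := hK'.image_closedBall_subset_compact (𝕜₁ := ℂ) 1
  have hmem : ∀ n, K₀ (v n) ∈ S := by
    intro n
    apply hSsub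
    exact ⟨v n, by simp [Metric.mem_closedBall, dist_eq_norm, hv1 n], rfl⟩
  obtain ⟨w, hwS, φ, hφ, hφtend⟩ := hScpt.tendsto_subseq hmem
  have hφat : Tendsto φ atTop atTop := hφ.tendsto_atTop
  -- the quantity bounding c tends to 0
  have hterm : Tendsto (fun n => ‖A (v (φ n))‖ + ‖(inner ℂ (K₀ (v (φ n))) (v (φ n)) : ℂ)‖)
      atTop (𝓝 0) := by
    have t1 : Tendsto (fun n => ‖A (v (φ n))‖) atTop (𝓝 0) := hAv.comp hφat
    have t2 : Tendsto (fun n => ‖(inner ℂ (K₀ (v (φ n))) (v (φ n)) : ℂ)‖) atTop (𝓝 0) := by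
      have hb : ∀ n, ‖(inner ℂ (K₀ (v (φ n))) (v (φ n)) : ℂ)‖
          ≤ ‖K₀ (v (φ n)) - w‖ + ‖(inner ℂ w (v (φ n)) : ℂ)‖ := by
        intro n
        have hsplit : (inner ℂ (K₀ (v (φ n))) (v (φ n)) : ℂ)
            = inner ℂ (K₀ (v (φ n)) - w) (v (φ n)) + inner ℂ w (v (φ n)) := by
          rw [inner_sub_left]; ring
        rw [hsplit]
        calc ‖(inner ℂ (K₀ (v (φ n)) - w) (v (φ n)) : ℂ) + inner ℂ w (v (φ n))‖
            ≤ ‖(inner ℂ (K₀ (v (φ n)) - w) (v (φ n)) : ℂ)‖ + ‖(inner ℂ w (v (φ n)) : ℂ)‖ :=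
              norm_add_le _ _
          _ ≤ ‖K₀ (v (φ n)) - w‖ * ‖v (φ n)‖ + ‖(inner ℂ w (v (φ n)) : ℂ)‖ := by
              gcongr
              exact norm_inner_le_norm _ _
          _ = ‖K₀ (v (φ n)) - w‖ + ‖(inner ℂ w (v (φ n)) : ℂ)‖ := by rw [hv1, mul_one]
      have g1 : Tendsto (fun n => ‖K₀ (v (φ n)) - w‖) atTop (𝓝 0) := by
        rw [← tendsto_zero_iff_norm_tendsto_zero]
        exact tendsto_sub_nhds_zero_iff.mpr hφtend
      have g2 : Tendsto (fun n => ‖(inner ℂ w (v (φ n)) : ℂ)‖) atTop (𝓝 0) :=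
        (hweakzero w).comp hφat
      have := g1.add g2
      rw [add_zero] at this
      exact squeeze_zero (fun n => norm_nonneg _) hb this
    have := t1.add t2
    rwa [add_zero] at this
  -- but it is bounded below by c
  have hge : ∀ n, c ≤ ‖A (v (φ n))‖ + ‖(inner ℂ (K₀ (v (φ n))) (v (φ n)) : ℂ)‖ := by
    intro n
    have h := hcoer (v (φ n))
    rw [hv1 (φ n)] at h
    simp only [one_pow, mul_one] at h
    calc c ≤ ‖(inner ℂ ((A + K₀) (v (φ n))) (v (φ n)) : ℂ)‖ := h
      _ = ‖(inner ℂ (A (v (φ n))) (v (φ n)) : ℂ) + inner ℂ (K₀ (v (φ n))) (v (φ n))‖ := by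
          rw [ContinuousLinearMap.add_apply, inner_add_left]
      _ ≤ ‖(inner ℂ (A (v (φ n))) (v (φ n)) : ℂ)‖ + ‖(inner ℂ (K₀ (v (φ n))) (v (φ n)) : ℂ)‖ :=
          norm_add_le _ _
      _ ≤ ‖A (v (φ n))‖ * ‖v (φ n)‖ + ‖(inner ℂ (K₀ (v (φ n))) (v (φ n)) : ℂ)‖ := by
          gcongr
          exact norm_inner_le_norm _ _
      _ = ‖A (v (φ n))‖ + ‖(inner ℂ (K₀ (v (φ n))) (v (φ n)) : ℂ)‖ := by rw [hv1, mul_one]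
  have hc0 : c ≤ 0 := ge_of_tendsto hterm (Eventually.of_forall hge)
  linarith
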